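/- For ℓ ∈ ℕ, ζ ∈ {0,1} and 0 ≤ k ≤ ℓ+ζ, every standard configuration η^{ℓ,ζ,k} (whose tile support is an ℓ×(ℓ+ζ) quasi-square with a bar of length k attached to one of its longest sides, positioned so that all its particles of type 2 lie in Λ⁻⁻) has energy H(η^{ℓ,ζ,k}) = −ε[ℓ(ℓ+ζ) + k] + Δ1·[ℓ + (ℓ+ζ) + 1 + 1_{k>0}], where ε = 4U − Δ1 − Δ2. -/

import Mathlib

/- Common framework: two-type Kawasaki dynamics on a finite box in ℤ². -/

abbrev Site := ℤ × ℤ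
abbrev Cell := ℤ × ℤ

/-- Nearest-neighbour adjacency on ℤ². -/
def adjacent (x y : Site) : Prop := |x.1 - y.1| + |x.2 - y.2| = 1

instance (x y : Site) : Decidable (adjacent x y) :=
  inferInstanceAs (Decidable (|x.1 - y.1| + |x.2 - y.2| = 1))

/-- The four nearest neighbours of a site. -/
def nbrs (x : Site) : Finset Site :=
  {(x.1 + 1, x.2), (x.1 - 1, x.2), (x.1, x.2 + 1), (x.1, x.2 - 1)}

/-- Internal boundary ∂⁻Λ of a finite set Λ ⊂ ℤ². -/
def intBdry (Λ : Finset Site) : Finset Site := Λ.filter (fun x => ¬ nbrs x ⊆ Λ)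

/-- Λ⁻ = Λ ∖ ∂⁻Λ. -/
def inner1 (Λ : Finset Site) : Finset Site := Λ \ intBdry Λ

/-- Λ⁻⁻ = Λ⁻ ∖ ∂⁻Λ⁻. -/
def inner2 (Λ : Finset Site) : Finset Site := inner1 Λ \ intBdry (inner1 Λ)

/-- A configuration on Λ: each site of Λ carries 0 (empty), 1 (type 1) or 2 (type 2);
sites outside Λ are empty. -/
structure Config (Λ : Finset Site) where
  val : Site → Fin 3
  zero_outside : ∀ x, x ∉ Λ → val x = 0

/-- Number of particles of type 1. -/
def numType1 {Λ : Finset Site} (η : Config Λ) : ℕ := (Λ.filter (fun x => η.val x = 1)).card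

/-- Number of particles of type 2. -/
def numType2 {Λ : Finset Site} (η : Config Λ) : ℕ := (Λ.filter (fun x => η.val x = 2)).card

/-- Number of active bonds: unordered n.n. pairs of sites of Λ⁻, one carrying a 1 and the
other a 2 (each such unordered pair is counted once, as the ordered pair (type1,type2)). -/
def numBonds {Λ : Finset Site} (η : Config Λ) : ℕ :=
  ((inner1 Λ ×ˢ inner1 Λ).filter
    (fun p => adjacent p.1 p.2 ∧ η.val p.1 = 1 ∧ η.val p.2 = 2)).card

/-- The Hamiltonian H(η) = −U·B(η) + Δ1·n1(η) + Δ2·n2(η). -/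
noncomputable def energy (U Δ1 Δ2 : ℝ) {Λ : Finset Site} (η : Config Λ) : ℝ :=
  -U * numBonds η + Δ1 * numType1 η + Δ2 * numType2 η

/-- Allowed moves of the Kawasaki dynamics: hopping inside Λ, creation and annihilation
at the internal boundary. -/
def Communicates {Λ : Finset Site} (η η' : Config Λ) : Prop :=
  (∃ x ∈ Λ, ∃ y ∈ Λ, adjacent x y ∧ η.val x = 0 ∧ η.val y ≠ 0 ∧
      η'.val = Function.update (Function.update η.val x (η.val y)) y 0) ∨
  (∃ x ∈ intBdry Λ, ∃ v : Fin 3, v ≠ 0 ∧ η.val x = 0 ∧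
      η'.val = Function.update η.val x v) ∨
  (∃ x ∈ intBdry Λ, η.val x ≠ 0 ∧ η'.val = Function.update η.val x 0)

/-- ω is a path of allowed moves from η to η′. -/
def IsPath {Λ : Finset Site} (ω : List (Config Λ)) (η η' : Config Λ) : Prop :=
  ω.head? = some η ∧ ω.getLast? = some η' ∧ ω.Chain' Communicates

/-- Communication height between two sets of configurations:
Φ(A,B) = min over paths from A to B of the maximal energy along the path. -/
noncomputable def commHeightSet (U Δ1 Δ2 : ℝ) {Λ : Finset Site}
    (A B : Set (Config Λ)) : ℝ :=
  sInf {m : ℝ | ∃ η ∈ A, ∃ η' ∈ B, ∃ ω : List (Config Λ),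
    IsPath ω η η' ∧ ∀ ξ ∈ ω, energy U Δ1 Δ2 ξ ≤ m}

/-- Communication height Φ(η,η′). -/
noncomputable def commHeight (U Δ1 Δ2 : ℝ) {Λ : Finset Site} (η η' : Config Λ) : ℝ :=
  commHeightSet U Δ1 Δ2 {η} {η'}

/-- Stability level V_η = Φ(η, I_η) − H(η), where I_η = {ξ : H(ξ) < H(η)}. -/
noncomputable def stabLevel (U Δ1 Δ2 : ℝ) {Λ : Finset Site} (η : Config Λ) : ℝ :=
  commHeightSet U Δ1 Δ2 {η} {ξ : Config Λ | energy U Δ1 Δ2 ξ < energy U Δ1 Δ2 η}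
    - energy U Δ1 Δ2 η

/-- The set of stable configurations (global minimizers of H). -/
def Xstab (U Δ1 Δ2 : ℝ) (Λ : Finset Site) : Set (Config Λ) :=
  {η | ∀ ξ : Config Λ, energy U Δ1 Δ2 η ≤ energy U Δ1 Δ2 ξ}

/-- The set of metastable configurations (non-stable configurations of maximal
stability level). -/
def Xmeta (U Δ1 Δ2 : ℝ) (Λ : Finset Site) : Set (Config Λ) :=
  {η | η ∉ Xstab U Δ1 Δ2 Λ ∧
    ∀ ξ : Config Λ, ξ ∉ Xstab U Δ1 Δ2 Λ → stabLevel U Δ1 Δ2 ξ ≤ stabLevel U Δ1 Δ2 η}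

/-- The empty configuration □. -/
def emptyConfig (Λ : Finset Site) : Config Λ := ⟨fun _ => 0, fun _ _ => rfl⟩

/-- The critical length ℓ* = ⌈Δ1/(4U − Δ1 − Δ2)⌉. -/
noncomputable def lstar (U Δ1 Δ2 : ℝ) : ℤ := ⌈Δ1 / (4 * U - Δ1 - Δ2)⌉

/-- The box Λ: in dual coordinates u(x) = ((x1−x2)/2,(x1+x2)/2) the
(L+3/2)×(L+3/2) square centered at the origin, i.e. |x1−x2| ≤ L+1 and |x1+x2| ≤ L+1. -/
noncomputable def latBox (L : ℕ) : Finset Site :=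
  (Finset.Icc (-(L : ℤ) - 1) ((L : ℤ) + 1) ×ˢ Finset.Icc (-(L : ℤ) - 1) ((L : ℤ) + 1)).filter
    (fun x => |x.1 - x.2| ≤ (L : ℤ) + 1 ∧ |x.1 + x.2| ≤ (L : ℤ) + 1)

/-- The m×n dual rectangle of sites (in dual coordinates) with dual lower-left corner p
(in standard coordinates): sites p + i·(1,−1) + j·(1,1) for 0 ≤ i < m, 0 ≤ j < n.
All these sites have the same parity. -/
def dualRect (p : Site) (m n : ℕ) : Finset Site :=
  (Finset.range m ×ˢ Finset.range n).image
    (fun ij => ((p.1 + (ij.1 : ℤ) + (ij.2 : ℤ), p.2 + (ij.2 : ℤ) - (ij.1 : ℤ)) : Site))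

/-- The sites adjacent to a set S but not in S. -/
def siteBorder (S : Finset Site) : Finset Site := S.biUnion nbrs \ S

/-- ⊞: the tb-tiled configurations whose particles of type 2 occupy an L×L square in dual
coordinates filling Λ⁻ (type-2 sites in Λ⁻⁻, surrounding type-1 sites in Λ⁻); these are
the two largest checkerboard droplets (one of each parity). -/
def boxPlus (L : ℕ) : Set (Config (latBox L)) :=
  {η | ∃ p : Site,
      (∀ x, η.val x = 2 ↔ x ∈ dualRect p L L) ∧
      (∀ x, η.val x = 1 ↔ x ∈ siteBorder (dualRect p L L)) ∧
      dualRect p L L ⊆ inner2 (latBox L) ∧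
      siteBorder (dualRect p L L) ⊆ inner1 (latBox L)}

/-- The active-bond relation between sites. -/
def bondRel {Λ : Finset Site} (η : Config Λ) (x y : Site) : Prop :=
  x ∈ inner1 Λ ∧ y ∈ inner1 Λ ∧ adjacent x y ∧
  ((η.val x = 1 ∧ η.val y = 2) ∨ (η.val x = 2 ∧ η.val y = 1))

/-- C is a cluster of η: a maximal connected component of the occupied sites under the
active-bond relation. -/
def IsCluster {Λ : Finset Site} (η : Config Λ) (C : Finset Site) : Prop :=
  ∃ x : Site, η.val x ≠ 0 ∧ ∀ y : Site, y ∈ C ↔ Relation.ReflTransGen (bondRel η) x y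

/-- The occupied sites of η form a single cluster. -/
def SingleCluster {Λ : Finset Site} (η : Config Λ) : Prop :=
  ∃ x : Site, η.val x ≠ 0 ∧
    ∀ y : Site, η.val y ≠ 0 → Relation.ReflTransGen (bondRel η) x y

/-- Dual coordinates, renormalized to land in ℤ² (within a fixed parity class this maps
dual neighbours to adjacent cells). -/
def cellOf (x : Site) : Cell := ((x.1 - x.2).fdiv 2, (x.1 + x.2).fdiv 2)

/-- The sites of Λ occupied by particles of type 2. -/
def type2Sites {Λ : Finset Site} (η : Config Λ) : Finset Site :=
  Λ.filter (fun x => η.val x = 2)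

/-- Tile support of a configuration: the polyomino in dual coordinates given by the unit
squares centered at the particles of type 2. -/
def tileSupport {Λ : Finset Site} (η : Config Λ) : Finset Cell :=
  (type2Sites η).image cellOf

/- ----------  Polyominoes ---------- -/

/-- Perimeter of a polyomino (number of boundary edges, inner boundaries included). -/
def perim (A : Finset Cell) : ℕ :=
  A.sum (fun c => ((nbrs c).filter (fun d => d ∉ A)).card)

def adjIn (A : Finset Cell) (x y : Cell) : Prop := x ∈ A ∧ y ∈ A ∧ adjacent x y

/-- Connectedness of a polyomino. -/
def PolyConnected (A : Finset Cell) : Prop :=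
  A.Nonempty ∧ ∀ x ∈ A, ∀ y ∈ A, Relation.ReflTransGen (adjIn A) x y

/-- Number of holes: bounded (= finite) connected components of the complement. -/
noncomputable def numHoles (A : Finset Cell) : ℕ :=
  Set.ncard {C : Set Cell | ∃ d : Cell, d ∉ A ∧
    C = {e : Cell | Relation.ReflTransGen (fun u v => adjacent u v ∧ u ∉ A ∧ v ∉ A) d e} ∧
    C.Finite}

/-- The four cells having lattice point v as a corner. -/
def cellsAt (v : Cell) : Finset Cell :=
  {(v.1 - 1, v.2 - 1), (v.1 - 1, v.2), (v.1, v.2 - 1), v}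

/-- The lattice points that are corners of cells of A. -/
def vertexSet (A : Finset Cell) : Finset Cell :=
  A.biUnion (fun c => {c, (c.1 + 1, c.2), (c.1, c.2 + 1), (c.1 + 1, c.2 + 1)})

def occAt (A : Finset Cell) (v : Cell) : ℕ := ((cellsAt v).filter (fun c => c ∈ A)).card

/-- Number of convex corners ψ(A): vertices with exactly one incident occupied cell. -/
def convexCorners (A : Finset Cell) : ℕ :=
  (vertexSet A).sum (fun v => if occAt A v = 1 then 1 else 0)

/-- Number of concave corners φ(A): a vertex with three incident occupied cells counts
once, a vertex with two diagonally opposite occupied cells counts twice. -/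
def concaveCorners (A : Finset Cell) : ℕ :=
  (vertexSet A).sum (fun v =>
    if occAt A v = 3 then 1
    else if occAt A v = 2 ∧ (((v.1 - 1, v.2 - 1) ∈ A ∧ v ∈ A) ∨
          ((v.1 - 1, v.2) ∈ A ∧ (v.1, v.2 - 1) ∈ A)) then 2
    else 0)

/-- T(A) = 2P(A) + ψ(A) − φ(A). -/
def Tpoly (A : Finset Cell) : ℤ :=
  2 * (perim A : ℤ) + (convexCorners A : ℤ) - (concaveCorners A : ℤ)

/-- For connected polyominoes, T(A) = 2P(A) + 4 − 4Q(A). -/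
noncomputable def Tconn (A : Finset Cell) : ℤ :=
  2 * (perim A : ℤ) + 4 - 4 * (numHoles A : ℤ)

/-- Width (number of columns) of the circumscribing rectangle. -/
def polyWidth (A : Finset Cell) : ℤ :=
  (WithBot.unbotD 0 (A.image Prod.fst).max) - (WithTop.untopD 0 (A.image Prod.fst).min) + 1

/-- Height (number of rows) of the circumscribing rectangle. -/
def polyHeight (A : Finset Cell) : ℤ :=
  (WithBot.unbotD 0 (A.image Prod.snd).max) - (WithTop.untopD 0 (A.image Prod.snd).min) + 1

/-- A polyomino is monotone if its perimeter equals the perimeter of its circumscribing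
rectangle. -/
def MonotonePoly (A : Finset Cell) : Prop :=
  (perim A : ℤ) = 2 * (polyWidth A + polyHeight A)

/-- The reference standard polyomino: an (l+ζ)×l rectangle (quasi-square, ζ ∈ {0,1})
with a bar of length k attached to a longest side, starting at offset a. -/
def baseStd (l ζ a k : ℕ) : Finset Cell :=
  ((Finset.range (l + ζ)) ×ˢ (Finset.range l)).image
      (fun q => (((q.1 : ℤ), (q.2 : ℤ)) : Cell))
    ∪ (Finset.range k).image (fun i => ((((a + i : ℕ) : ℤ), (l : ℤ)) : Cell))

/-- The eight symmetries of the square lattice. -/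
def dihedralMaps : List (Cell → Cell) :=
  [fun c => (c.1, c.2), fun c => (-c.1, c.2), fun c => (c.1, -c.2), fun c => (-c.1, -c.2),
   fun c => (c.2, c.1), fun c => (-c.2, c.1), fun c => (c.2, -c.1), fun c => (-c.2, -c.1)]

/-- A standard polyomino: a quasi-square with possibly a bar attached to one of its
longest sides (up to lattice symmetries and translations). -/
def IsStandardPoly (A : Finset Cell) : Prop :=
  ∃ l ζ a k : ℕ, 1 ≤ l ∧ ζ ≤ 1 ∧ a + k ≤ l + ζ ∧
    ∃ f ∈ dihedralMaps, ∃ t : Cell,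
      A = (baseStd l ζ a k).image (fun c => (((f c).1 + t.1, (f c).2 + t.2) : Cell))

/- ----------  tb-tiled configurations ---------- -/

/-- V_{*,k}: configurations with exactly k particles of type 2, all lying in Λ⁻⁻. -/
def VStar (Λ : Finset Site) (k : ℕ) : Set (Config Λ) :=
  {η | numType2 η = k ∧ ∀ x, η.val x = 2 → x ∈ inner2 Λ}

/-- V_{*,k}^{4k}: configurations of V_{*,k} with exactly 4k active bonds and no isolated
particle of type 1 (the tb-tiled configurations with k particles of type 2). -/
def VTiled (Λ : Finset Site) (k : ℕ) : Set (Config Λ) :=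
  {η | η ∈ VStar Λ k ∧ numBonds η = 4 * k ∧
    ∀ x, η.val x = 1 → ∃ y ∈ nbrs x, η.val y = 2}

/-- All particles of type 2 have the same (site) parity. -/
def SameParity2 {Λ : Finset Site} (η : Config Λ) : Prop :=
  ∀ x y : Site, η.val x = 2 → η.val y = 2 → (x.1 + x.2) % 2 = (y.1 + y.2) % 2

/-- A standard configuration: tile support a standard polyomino (all type-2 particles of
one parity). -/
def IsStandardConfig {Λ : Finset Site} (η : Config Λ) : Prop :=
  SameParity2 η ∧ IsStandardPoly (tileSupport η)

/-- A tb-tiled configuration: at least one particle of type 2, every particle of type 2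
saturated, no isolated particle of type 1. -/
def IsTbTiled {Λ : Finset Site} (η : Config Λ) : Prop :=
  (∃ x, η.val x = 2) ∧
  (∀ x, η.val x = 2 → ∀ y ∈ nbrs x, η.val y = 1) ∧
  (∀ x, η.val x = 1 → ∃ y ∈ nbrs x, η.val y = 2)

/-- η is the tb-tiled droplet with type-2 sites S: type-2 exactly on S, type-1 exactly
on the border of S, empty elsewhere. -/
def IsTbDroplet {Λ : Finset Site} (η : Config Λ) (S : Finset Site) : Prop :=
  (∀ x, η.val x = 2 ↔ x ∈ S) ∧ (∀ x, η.val x = 1 ↔ x ∈ siteBorder S)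

/- ----------  cluster-wise quantities ---------- -/

def numType1In {Λ : Finset Site} (η : Config Λ) (C : Finset Site) : ℕ :=
  (C.filter (fun x => η.val x = 1)).card

def numType2In {Λ : Finset Site} (η : Config Λ) (C : Finset Site) : ℕ :=
  (C.filter (fun x => η.val x = 2)).card

def numBondsIn {Λ : Finset Site} (η : Config Λ) (C : Finset Site) : ℕ :=
  ((C ×ˢ C).filter (fun q => q.1 ∈ inner1 Λ ∧ q.2 ∈ inner1 Λ ∧ adjacent q.1 q.2 ∧
    η.val q.1 = 1 ∧ η.val q.2 = 2)).card

def tileSupportIn {Λ : Finset Site} (η : Config Λ) (C : Finset Site) : Finset Cell :=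
  (C.filter (fun x => η.val x = 2)).image cellOf

/-- Number of active bonds incident to the site x. -/
def bondDeg {Λ : Finset Site} (η : Config Λ) (x : Site) : ℕ :=
  ((nbrs x).filter (fun y => x ∈ inner1 Λ ∧ y ∈ inner1 Λ ∧
    ((η.val x = 1 ∧ η.val y = 2) ∨ (η.val x = 2 ∧ η.val y = 1)))).card

/-- Number of missing bonds of the type-1 particles of C. -/
def missingBonds {Λ : Finset Site} (η : Config Λ) (C : Finset Site) : ℤ :=
  ∑ x ∈ C.filter (fun x => η.val x = 1), (4 - (bondDeg η x : ℤ))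

/- ----------  geometry for the energy-reduction mechanisms ---------- -/

/-- A site is lattice-connecting: there is a n.n. path of empty sites from it to ∂⁻Λ. -/
def LatticeConnecting {Λ : Finset Site} (η : Config Λ) (x : Site) : Prop :=
  ∃ l : List Site, List.Chain adjacent x l ∧
    (x :: l).getLast (List.cons_ne_nil x l) ∈ intBdry Λ ∧
    ∀ y ∈ l, y ∈ Λ ∧ η.val y = 0

/-- A pending dimer (x,y): a lattice-connecting type-1 particle x whose unique active
bond is with the adjacent type-2 particle y, which has at most three active bonds. -/
def PendingDimer {Λ : Finset Site} (η : Config Λ) (x y : Site) : Prop :=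
  bondRel η x y ∧ η.val x = 1 ∧ η.val y = 2 ∧ LatticeConnecting η x ∧
  bondDeg η x = 1 ∧ bondDeg η y ≤ 3

/-- The sites of a horizontal (in dual coordinates) beam of length l: l+1 particles of
type 1 at mutual dual distance 1, with left-most site p. -/
def beamSites (p : Site) (l : ℕ) : Finset Site :=
  (Finset.range (l + 1)).image (fun i : ℕ => ((p.1 + (i : ℤ), p.2 - (i : ℤ)) : Site))

/-- The center row of the (south) support of the beam. -/
def centerSites (p : Site) (l : ℕ) : Finset Site :=
  (Finset.range l).image (fun i : ℕ => ((p.1 + (i : ℤ), p.2 - 1 - (i : ℤ)) : Site))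

/-- The basement row of the (south) support of the beam. -/
def basementSites (p : Site) (l : ℕ) : Finset Site :=
  (Finset.range (l + 1)).image (fun i : ℕ => ((p.1 - 1 + (i : ℤ), p.2 - 1 - (i : ℤ)) : Site))

/-- The (south) support of a beam/bridge. -/
def bridgeSupport (p : Site) (l : ℕ) : Finset Site :=
  beamSites p l ∪ centerSites p l ∪ basementSites p l

/-- The 12 sites of a slot: a 4×4 block minus its four corner sites; p is the lower-left
corner of the block. -/
def slotSites (p : Site) : Finset Site :=
  ((Finset.range 4 ×ˢ Finset.range 4).image
      (fun ij => ((p.1 + (ij.1 : ℤ), p.2 + (ij.2 : ℤ)) : Site))) \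
    {(p.1, p.2), (p.1 + 3, p.2), (p.1, p.2 + 3), (p.1 + 3, p.2 + 3)}

/-- The slot-conjugate (diagonally opposite) ordered pairs of central sites of a slot. -/
def slotDiagPairs (p : Site) : List (Site × Site) :=
  [((p.1 + 1, p.2 + 1), (p.1 + 2, p.2 + 2)), ((p.1 + 2, p.2 + 2), (p.1 + 1, p.2 + 1)),
   ((p.1 + 1, p.2 + 2), (p.1 + 2, p.2 + 1)), ((p.1 + 2, p.2 + 1), (p.1 + 1, p.2 + 2))]

/-- The type-2 sites of the bar added on side d (0 = north, 1 = south, 2 = east,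
3 = west, in dual coordinates) of the m×n dual rectangle with corner p. -/
def sideBar (p : Site) (m n : ℕ) (d : Fin 4) : Finset Site :=
  if d = 0 then dualRect (p.1 + (n : ℤ), p.2 + (n : ℤ)) m 1
  else if d = 1 then dualRect (p.1 - 1, p.2 - 1) m 1
  else if d = 2 then dualRect (p.1 + (m : ℤ), p.2 - (m : ℤ)) 1 n
  else dualRect (p.1 - 1, p.2 + 1) 1 n

/-- The length of side d of an m×n dual rectangle. -/
def sideLen (m n : ℕ) (d : Fin 4) : ℕ := if (d : ℕ) ≤ 1 then m else n

/-- The type-2 sites left after removing the outermost bar on side d of the m×n dual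
rectangle with corner p. -/
def shrunkRect (p : Site) (m n : ℕ) (d : Fin 4) : Finset Site :=
  if d = 0 then dualRect p m (n - 1)
  else if d = 1 then dualRect (p.1 + 1, p.2 + 1) m (n - 1)
  else if d = 2 then dualRect p (m - 1) n
  else dualRect (p.1 + 1, p.2 - 1) (m - 1) n


/- ----------  auxiliary lemmas for Statement 9 ---------- -/

section EnergyStdAux

lemma adjacent_comm' {x y : Site} : adjacent x y ↔ adjacent y x := by
  unfold adjacent; rw [abs_sub_comm, abs_sub_comm x.2 y.2]

lemma mem_nbrs' {x y : Site} : y ∈ nbrs x ↔ adjacent x y := by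
  simp only [nbrs, Finset.mem_insert, Finset.mem_singleton, Prod.ext_iff, adjacent,
    Int.abs_eq_natAbs]
  omega

lemma card_nbrs' (x : Site) : (nbrs x).card = 4 := by
  rw [nbrs]
  rw [Finset.card_insert_of_notMem (by
    simp only [Finset.mem_insert, Finset.mem_singleton, Prod.mk.injEq]; omega)]
  rw [Finset.card_insert_of_notMem (by
    simp only [Finset.mem_insert, Finset.mem_singleton, Prod.mk.injEq]; omega)]
  rw [Finset.card_insert_of_notMem (by
    simp only [Finset.mem_singleton, Prod.mk.injEq]; omega)]
  rfl

lemma inner2_subset_inner1' {Λ : Finset Site} : inner2 Λ ⊆ inner1 Λ := Finset.sdiff_subset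

lemma nbrs_subset_of_inner2' {Λ : Finset Site} {y : Site} (hy : y ∈ inner2 Λ) :
    nbrs y ⊆ inner1 Λ := by
  simp only [inner2, Finset.mem_sdiff, intBdry, Finset.mem_filter] at hy
  by_contra h
  exact hy.2 ⟨hy.1, h⟩

lemma mem_type2' {Λ : Finset Site} (η : Config Λ) {x : Site} :
    x ∈ type2Sites η ↔ η.val x = 2 := by
  rw [type2Sites, Finset.mem_filter]
  constructor
  · exact fun h => h.2
  · intro h
    refine ⟨?_, h⟩
    by_contra hx
    rw [η.zero_outside x hx] at h
    exact absurd h (by decide)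

lemma val1_iff' {Λ : Finset Site} (η : Config Λ) (htb : IsTbTiled η) {x : Site} :
    η.val x = 1 ↔ x ∈ siteBorder (type2Sites η) := by
  simp only [siteBorder, Finset.mem_sdiff, Finset.mem_biUnion]
  constructor
  · intro h1
    obtain ⟨y, hy, hy2⟩ := htb.2.2 x h1
    refine ⟨⟨y, (mem_type2' η).2 hy2, mem_nbrs'.2 (adjacent_comm'.1 (mem_nbrs'.1 hy))⟩,
      fun hxS => ?_⟩
    rw [(mem_type2' η).1 hxS] at h1
    exact absurd h1 (by decide)
  · rintro ⟨⟨y, hyS, hxy⟩, -⟩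
    exact htb.2.1 y ((mem_type2' η).1 hyS) x hxy

lemma filter1_eq' {Λ : Finset Site} (η : Config Λ) (htb : IsTbTiled η) :
    Λ.filter (fun x => η.val x = 1) = siteBorder (type2Sites η) := by
  ext x
  rw [Finset.mem_filter]
  constructor
  · rintro ⟨-, h1⟩
    exact (val1_iff' η htb).1 h1
  · intro hx
    have h1 := (val1_iff' η htb).2 hx
    refine ⟨?_, h1⟩
    by_contra hxΛ
    rw [η.zero_outside x hxΛ] at h1
    exact absurd h1 (by decide)

lemma numBonds_eq' {Λ : Finset Site} (η : Config Λ) (htb : IsTbTiled η)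
    (hin : ∀ x, η.val x = 2 → x ∈ inner2 Λ) :
    numBonds η = 4 * numType2 η := by
  have hset : ((inner1 Λ ×ˢ inner1 Λ).filter
      (fun p => adjacent p.1 p.2 ∧ η.val p.1 = 1 ∧ η.val p.2 = 2)) =
      (type2Sites η).biUnion (fun y => (nbrs y).image (fun x => (x, y))) := by
    ext p
    simp only [Finset.mem_filter, Finset.mem_product, Finset.mem_biUnion, Finset.mem_image]
    constructor
    · rintro ⟨⟨h1, h2⟩, hadj, hv1, hv2⟩
      exact ⟨p.2, (mem_type2' η).2 hv2, p.1, mem_nbrs'.2 (adjacent_comm'.1 hadj), rfl⟩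
    · rintro ⟨y, hyS, x, hx, rfl⟩
      have hy2 := (mem_type2' η).1 hyS
      have hyin2 := hin y hy2
      exact ⟨⟨nbrs_subset_of_inner2' hyin2 hx, inner2_subset_inner1' hyin2⟩,
        adjacent_comm'.1 (mem_nbrs'.1 hx), htb.2.1 y hy2 x hx, hy2⟩
  rw [numBonds, hset, Finset.card_biUnion (by
      intro y1 h1 y2 h2 hne
      rw [Function.onFun, Finset.disjoint_left]
      rintro p hp1 hp2
      simp only [Finset.mem_image] at hp1 hp2
      obtain ⟨x1, -, rfl⟩ := hp1
      obtain ⟨x2, -, h⟩ := hp2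
      exact hne (congrArg Prod.snd h).symm)]
  have hc : ∀ y ∈ type2Sites η, ((nbrs y).image (fun x => (x, y))).card = 4 := by
    intro y _
    rw [Finset.card_image_of_injective _ (fun a b h => congrArg Prod.fst h), card_nbrs']
  rw [Finset.sum_congr rfl hc, Finset.sum_const, smul_eq_mul, mul_comm]
  rfl

lemma cellOf_eq' (x : Site) : cellOf x = ((x.1 - x.2) / 2, (x.1 + x.2) / 2) := by
  unfold cellOf
  rw [Int.fdiv_eq_ediv_of_nonneg _ (by norm_num), Int.fdiv_eq_ediv_of_nonneg _ (by norm_num)]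

lemma cellOf_injOn' {Λ : Finset Site} (η : Config Λ) (hpar : SameParity2 η) :
    Set.InjOn cellOf (type2Sites η : Set Site) := by
  intro x hx y hy h
  have hp := hpar x y ((mem_type2' η).1 hx) ((mem_type2' η).1 hy)
  rw [cellOf_eq', cellOf_eq', Prod.mk.injEq] at h
  rw [Prod.ext_iff]
  omega

/-- The lattice vertex associated to a border site. -/
def vmapAux (y : Site) : Cell := ((y.1 - y.2 + 1) / 2, (y.1 + y.2 + 1) / 2)

/-- The four vertices of a cell. -/
def myCorners (c : Cell) : Finset Cell := {c, (c.1 + 1, c.2), (c.1, c.2 + 1), (c.1 + 1, c.2 + 1)}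

lemma vertexSet_def' (A : Finset Cell) : vertexSet A = A.biUnion myCorners := rfl

lemma card_siteBorder' {Λ : Finset Site} (η : Config Λ) (hpar : SameParity2 η) :
    (siteBorder (type2Sites η)).card = (vertexSet (tileSupport η)).card := by
  apply Finset.card_bij (fun y _ => vmapAux y)
  · intro y hy
    simp only [siteBorder, Finset.mem_sdiff, Finset.mem_biUnion] at hy
    obtain ⟨⟨x, hxS, hyx⟩, -⟩ := hy
    rw [vertexSet_def', Finset.mem_biUnion]
    refine ⟨cellOf x, Finset.mem_image_of_mem _ hxS, ?_⟩
    simp only [myCorners, Finset.mem_insert, Finset.mem_singleton, vmapAux, cellOf_eq',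
      Prod.mk.injEq, Prod.ext_iff]
    simp only [nbrs, Finset.mem_insert, Finset.mem_singleton, Prod.ext_iff] at hyx
    omega
  · intro y1 h1 y2 h2 hv
    simp only [siteBorder, Finset.mem_sdiff, Finset.mem_biUnion] at h1 h2
    obtain ⟨⟨x1, hx1, hy1⟩, -⟩ := h1
    obtain ⟨⟨x2, hx2, hy2⟩, -⟩ := h2
    have hp := hpar x1 x2 ((mem_type2' η).1 hx1) ((mem_type2' η).1 hx2)
    simp only [nbrs, Finset.mem_insert, Finset.mem_singleton, Prod.ext_iff] at hy1 hy2
    simp only [vmapAux, Prod.mk.injEq] at hv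
    rw [Prod.ext_iff]
    omega
  · intro w hw
    rw [vertexSet_def', Finset.mem_biUnion] at hw
    obtain ⟨c, hcA, hwc⟩ := hw
    rw [show tileSupport η = (type2Sites η).image cellOf from rfl, Finset.mem_image] at hcA
    obtain ⟨x, hxS, rfl⟩ := hcA
    have hnb : ∀ y : Site, y ∈ nbrs x → vmapAux y = w →
        ∃ y', ∃ hy' : y' ∈ siteBorder (type2Sites η), vmapAux y' = w := by
      intro y hy hvw
      refine ⟨y, ?_, hvw⟩
      simp only [siteBorder, Finset.mem_sdiff]
      refine ⟨Finset.mem_biUnion.2 ⟨x, hxS, hy⟩, fun hyS => ?_⟩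
      have hp := hpar y x ((mem_type2' η).1 hyS) ((mem_type2' η).1 hxS)
      simp only [nbrs, Finset.mem_insert, Finset.mem_singleton, Prod.ext_iff] at hy
      omega
    simp only [myCorners, Finset.mem_insert, Finset.mem_singleton] at hwc
    rcases hwc with h | h | h | h
    · exact hnb (x.1 - 1, x.2) (by simp [nbrs]) (by
        rw [h]; simp only [vmapAux, cellOf_eq', Prod.mk.injEq]; omega)
    · exact hnb (x.1, x.2 - 1) (by simp [nbrs]) (by
        rw [h]; simp only [vmapAux, cellOf_eq', Prod.mk.injEq]; omega)
    · exact hnb (x.1, x.2 + 1) (by simp [nbrs]) (by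
        rw [h]; simp only [vmapAux, cellOf_eq', Prod.mk.injEq]; omega)
    · exact hnb (x.1 + 1, x.2) (by simp [nbrs]) (by
        rw [h]; simp only [vmapAux, cellOf_eq', Prod.mk.injEq]; omega)

lemma vertexSet_union' (A B : Finset Cell) :
    vertexSet (A ∪ B) = vertexSet A ∪ vertexSet B := by
  ext v
  simp only [vertexSet_def', Finset.mem_biUnion, Finset.mem_union]
  constructor
  · rintro ⟨c, (h | h), hv⟩
    · exact Or.inl ⟨c, h, hv⟩
    · exact Or.inr ⟨c, h, hv⟩
  · rintro (⟨c, h, hv⟩ | ⟨c, h, hv⟩)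
    · exact ⟨c, Or.inl h, hv⟩
    · exact ⟨c, Or.inr h, hv⟩

lemma card_vertexSet_image' (B : Finset Cell) (g τ : Cell → Cell)
    (h : ∀ c, myCorners (g c) = (myCorners c).image τ) (hτ : Function.Injective τ) :
    (vertexSet (B.image g)).card = (vertexSet B).card := by
  have key : vertexSet (B.image g) = (vertexSet B).image τ := by
    rw [vertexSet_def', vertexSet_def', Finset.biUnion_image, Finset.image_biUnion]
    exact Finset.biUnion_congr rfl (fun c _ => h c)
  rw [key, Finset.card_image_of_injective _ hτ]

lemma card_IccProd' (a b c d : ℤ) (m n : ℕ) (h1 : b + 1 - a = (m : ℤ))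
    (h2 : d + 1 - c = (n : ℤ)) :
    (Finset.Icc a b ×ˢ Finset.Icc c d).card = m * n := by
  rw [Finset.card_product, Int.card_Icc, Int.card_Icc]
  have e1 : (b + 1 - a).toNat = m := by omega
  have e2 : (d + 1 - c).toNat = n := by omega
  rw [e1, e2]

lemma vertexSet_Icc' (a b c d : ℤ) (hab : a ≤ b) (hcd : c ≤ d) :
    vertexSet (Finset.Icc a b ×ˢ Finset.Icc c d) =
      Finset.Icc a (b + 1) ×ˢ Finset.Icc c (d + 1) := by
  ext v
  simp only [vertexSet_def', Finset.mem_biUnion, Finset.mem_product, Finset.mem_Icc, myCorners,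
    Finset.mem_insert, Finset.mem_singleton, Prod.ext_iff]
  constructor
  · rintro ⟨u, ⟨⟨h1, h2⟩, h3, h4⟩, hc⟩
    omega
  · rintro ⟨⟨h1, h2⟩, h3, h4⟩
    refine ⟨(max a (v.1 - 1), max c (v.2 - 1)), ⟨⟨?_, ?_⟩, ?_, ?_⟩, ?_⟩ <;> dsimp only <;> omega

lemma rect_eq' (m n : ℕ) :
    ((Finset.range m) ×ˢ (Finset.range n)).image (fun q => (((q.1 : ℤ), (q.2 : ℤ)) : Cell)) =
    Finset.Icc (0 : ℤ) ((m : ℤ) - 1) ×ˢ Finset.Icc (0 : ℤ) ((n : ℤ) - 1) := by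
  ext c
  simp only [Finset.mem_image, Finset.mem_product, Finset.mem_range, Finset.mem_Icc,
    Prod.ext_iff]
  constructor
  · rintro ⟨⟨i, j⟩, ⟨hi, hj⟩, h1, h2⟩
    dsimp only at h1 h2
    omega
  · rintro ⟨⟨h1, h2⟩, h3, h4⟩
    exact ⟨(c.1.toNat, c.2.toNat), ⟨by omega, by omega⟩, by dsimp only; omega,
      by dsimp only; omega⟩

lemma bar_eq' (a k l : ℕ) :
    (Finset.range k).image (fun i => ((((a + i : ℕ) : ℤ), (l : ℤ)) : Cell)) =
    Finset.Icc (a : ℤ) ((a : ℤ) + (k : ℤ) - 1) ×ˢ Finset.Icc (l : ℤ) (l : ℤ) := by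
  ext c
  simp only [Finset.mem_image, Finset.mem_range, Finset.mem_product, Finset.mem_Icc,
    Prod.ext_iff]
  constructor
  · rintro ⟨i, hi, h1, h2⟩
    omega
  · rintro ⟨⟨h1, h2⟩, h3, h4⟩
    exact ⟨(c.1 - a).toNat, by omega, by omega, by omega⟩

lemma card_baseStd' (l ζ a k : ℕ) :
    (baseStd l ζ a k).card = l * (l + ζ) + k := by
  rw [baseStd, rect_eq', bar_eq', Finset.card_union_of_disjoint (by
      rw [Finset.disjoint_left]
      intro p hp hq
      simp only [Finset.mem_product, Finset.mem_Icc] at hp hq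
      omega),
    card_IccProd' _ _ _ _ (l + ζ) l (by push_cast; ring) (by push_cast; ring),
    card_IccProd' _ _ _ _ k 1 (by push_cast; ring) (by norm_num)]
  ring

lemma card_vertexSet_baseStd' (l ζ a k : ℕ) (hl : 1 ≤ l) (hak : a + k ≤ l + ζ) :
    (vertexSet (baseStd l ζ a k)).card =
      (l + ζ + 1) * (l + 1) + (if 0 < k then k + 1 else 0) := by
  rcases Nat.eq_zero_or_pos k with hk | hk
  · subst hk
    rw [if_neg (by omega), baseStd, Finset.range_zero, Finset.image_empty, Finset.union_empty,
      rect_eq', vertexSet_Icc' _ _ _ _ (by omega) (by omega),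
      card_IccProd' _ _ _ _ (l + ζ + 1) (l + 1) (by push_cast; ring) (by push_cast; ring)]
    ring
  · rw [if_pos hk]
    have h1 : vertexSet (baseStd l ζ a k) =
        (Finset.Icc (0 : ℤ) ((l : ℤ) + (ζ : ℤ)) ×ˢ Finset.Icc (0 : ℤ) (l : ℤ)) ∪
        (Finset.Icc (a : ℤ) ((a : ℤ) + (k : ℤ)) ×ˢ
          Finset.Icc ((l : ℤ) + 1) ((l : ℤ) + 1)) := by
      rw [baseStd, rect_eq', bar_eq', vertexSet_union',
        vertexSet_Icc' _ _ _ _ (by omega) (by omega),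
        vertexSet_Icc' _ _ _ _ (by omega) le_rfl]
      ext v
      simp only [Finset.mem_union, Finset.mem_product, Finset.mem_Icc]
      omega
    rw [h1, Finset.card_union_of_disjoint (by
        rw [Finset.disjoint_left]
        intro p hp hq
        simp only [Finset.mem_product, Finset.mem_Icc] at hp hq
        omega),
      card_IccProd' _ _ _ _ (l + ζ + 1) (l + 1) (by push_cast; ring) (by push_cast; ring),
      card_IccProd' _ _ _ _ (k + 1) 1 (by push_cast; ring) (by norm_num)]
    ring

lemma dihedral_corners' (f : Cell → Cell) (hf : f ∈ dihedralMaps) (t : Cell) :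
    ∃ τ : Cell → Cell, Function.Injective τ ∧
      Function.Injective (fun c : Cell => ((((f c).1 + t.1 : ℤ), ((f c).2 + t.2 : ℤ)) : Cell)) ∧
      ∀ c : Cell, myCorners (((f c).1 + t.1, (f c).2 + t.2)) = (myCorners c).image τ := by
  simp only [dihedralMaps, List.mem_cons, List.not_mem_nil, or_false] at hf
  rcases hf with rfl | rfl | rfl | rfl | rfl | rfl | rfl | rfl
  · refine ⟨fun v => (v.1 + t.1, v.2 + t.2), ?_, ?_, ?_⟩
    · intro u v h; simp only [Prod.mk.injEq] at h; rw [Prod.ext_iff]; omega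
    · intro u v h; simp only [Prod.mk.injEq] at h; rw [Prod.ext_iff]; omega
    · intro c; ext v
      simp only [myCorners, Finset.image_insert, Finset.image_singleton,
        Finset.mem_insert, Finset.mem_singleton, Prod.mk.injEq, Prod.ext_iff]
      omega
  · refine ⟨fun v => (-v.1 + t.1 + 1, v.2 + t.2), ?_, ?_, ?_⟩
    · intro u v h; simp only [Prod.mk.injEq] at h; rw [Prod.ext_iff]; omega
    · intro u v h; simp only [Prod.mk.injEq] at h; rw [Prod.ext_iff]; omega
    · intro c; ext v
      simp only [myCorners, Finset.image_insert, Finset.image_singleton,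
        Finset.mem_insert, Finset.mem_singleton, Prod.mk.injEq, Prod.ext_iff]
      omega
  · refine ⟨fun v => (v.1 + t.1, -v.2 + t.2 + 1), ?_, ?_, ?_⟩
    · intro u v h; simp only [Prod.mk.injEq] at h; rw [Prod.ext_iff]; omega
    · intro u v h; simp only [Prod.mk.injEq] at h; rw [Prod.ext_iff]; omega
    · intro c; ext v
      simp only [myCorners, Finset.image_insert, Finset.image_singleton,
        Finset.mem_insert, Finset.mem_singleton, Prod.mk.injEq, Prod.ext_iff]
      omega
  · refine ⟨fun v => (-v.1 + t.1 + 1, -v.2 + t.2 + 1), ?_, ?_, ?_⟩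
    · intro u v h; simp only [Prod.mk.injEq] at h; rw [Prod.ext_iff]; omega
    · intro u v h; simp only [Prod.mk.injEq] at h; rw [Prod.ext_iff]; omega
    · intro c; ext v
      simp only [myCorners, Finset.image_insert, Finset.image_singleton,
        Finset.mem_insert, Finset.mem_singleton, Prod.mk.injEq, Prod.ext_iff]
      omega
  · refine ⟨fun v => (v.2 + t.1, v.1 + t.2), ?_, ?_, ?_⟩
    · intro u v h; simp only [Prod.mk.injEq] at h; rw [Prod.ext_iff]; omega
    · intro u v h; simp only [Prod.mk.injEq] at h; rw [Prod.ext_iff]; omega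
    · intro c; ext v
      simp only [myCorners, Finset.image_insert, Finset.image_singleton,
        Finset.mem_insert, Finset.mem_singleton, Prod.mk.injEq, Prod.ext_iff]
      omega
  · refine ⟨fun v => (-v.2 + t.1 + 1, v.1 + t.2), ?_, ?_, ?_⟩
    · intro u v h; simp only [Prod.mk.injEq] at h; rw [Prod.ext_iff]; omega
    · intro u v h; simp only [Prod.mk.injEq] at h; rw [Prod.ext_iff]; omega
    · intro c; ext v
      simp only [myCorners, Finset.image_insert, Finset.image_singleton,
        Finset.mem_insert, Finset.mem_singleton, Prod.mk.injEq, Prod.ext_iff]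
      omega
  · refine ⟨fun v => (v.2 + t.1, -v.1 + t.2 + 1), ?_, ?_, ?_⟩
    · intro u v h; simp only [Prod.mk.injEq] at h; rw [Prod.ext_iff]; omega
    · intro u v h; simp only [Prod.mk.injEq] at h; rw [Prod.ext_iff]; omega
    · intro c; ext v
      simp only [myCorners, Finset.image_insert, Finset.image_singleton,
        Finset.mem_insert, Finset.mem_singleton, Prod.mk.injEq, Prod.ext_iff]
      omega
  · refine ⟨fun v => (-v.2 + t.1 + 1, -v.1 + t.2 + 1), ?_, ?_, ?_⟩
    · intro u v h; simp only [Prod.mk.injEq] at h; rw [Prod.ext_iff]; omega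
    · intro u v h; simp only [Prod.mk.injEq] at h; rw [Prod.ext_iff]; omega
    · intro c; ext v
      simp only [myCorners, Finset.image_insert, Finset.image_singleton,
        Finset.mem_insert, Finset.mem_singleton, Prod.mk.injEq, Prod.ext_iff]
      omega

end EnergyStdAux

/-- the energy of the standard configuration η^{ℓ,ζ,k} equals
−ε[ℓ(ℓ+ζ)+k] + Δ1[ℓ+(ℓ+ζ)+1+1_{k>0}]. -/
theorem energy_of_standard_configuration
    (U Δ1 Δ2 : ℝ) (hU : 0 < U) (hΔ1 : 0 < Δ1) (hΔ1U : Δ1 < U)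
    (hgap : 2 * U < Δ2 - Δ1) (hsum : Δ1 + Δ2 < 4 * U)
    (Λ : Finset Site) (η : Config Λ)
    (l ζ a k : ℕ) (hl : 1 ≤ l) (hζ : ζ ≤ 1) (hak : a + k ≤ l + ζ)
    (htb : IsTbTiled η)
    (hin : ∀ x, η.val x = 2 → x ∈ inner2 Λ)
    (hpar : SameParity2 η)
    (hshape : ∃ f ∈ dihedralMaps, ∃ t : Cell,
        tileSupport η = (baseStd l ζ a k).image
          (fun c => (((f c).1 + t.1, (f c).2 + t.2) : Cell))) :
    energy U Δ1 Δ2 η =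
      -(4 * U - Δ1 - Δ2) * ((l : ℝ) * ((l : ℝ) + (ζ : ℝ)) + (k : ℝ))
        + Δ1 * ((l : ℝ) + ((l : ℝ) + (ζ : ℝ)) + 1 + (if 0 < k then 1 else 0)) := by
  obtain ⟨f, hf, t, hA⟩ := hshape
  obtain ⟨τ, hτ, hg, hcor⟩ := dihedral_corners' f hf t
  have h2c : (tileSupport η).card = numType2 η := by
    rw [show tileSupport η = (type2Sites η).image cellOf from rfl,
      Finset.card_image_of_injOn (cellOf_injOn' η hpar)]
    rfl
  have hn2 : numType2 η = l * (l + ζ) + k := by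
    rw [← h2c, hA, Finset.card_image_of_injective _ hg, card_baseStd' l ζ a k]
  have hB : numBonds η = 4 * numType2 η := numBonds_eq' η htb hin
  have hn1 : numType1 η = (l + ζ + 1) * (l + 1) + (if 0 < k then k + 1 else 0) := by
    have h1 : numType1 η = (siteBorder (type2Sites η)).card := by
      rw [← filter1_eq' η htb]
      rfl
    rw [h1, card_siteBorder' η hpar, hA, card_vertexSet_image' _ _ _ hcor hτ,
      card_vertexSet_baseStd' l ζ a k hl hak]
  simp only [energy, hB, hn2, hn1]
  rcases Nat.eq_zero_or_pos k with hk | hk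
  · subst hk
    simp only [lt_self_iff_false, if_false]
    push_cast
    ring
  · simp only [hk, if_true]
    push_cast
    ring
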